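/- For the matrix T⁰ (defined by (T⁰)_{j,ℓ} = j/k if j=ℓ, 1-j/k if j=ℓ+1, 0 otherwise), the vector u^{(j)} with entries u^{(j)}(r) = C(j,r)/C(k,r) for 0 ≤ r ≤ j and u^{(j)}(r) = 0 for j < r ≤ k satisfies T⁰ u^{(j)} = (j/k) u^{(j)}. -/

import Mathlib

/-- The non-perturbed matrix `T⁰`: bidiagonal with `(T⁰)_{j,j} = j/k`,
`(T⁰)_{j,ℓ} = 1 - j/k` on the other nonzero diagonal (`ℓ` adjacent to `j`), else `0`. -/
noncomputable def T0 (k : ℕ) : Matrix (Fin (k + 1)) (Fin (k + 1)) ℝ :=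
  fun j l => if j = l then (j : ℝ) / k else if (l : ℕ) = (j : ℕ) + 1 then 1 - (j : ℝ) / k else 0

private lemma key_arith (k j r : ℕ) (hk : 1 ≤ k) (hj : j ≤ k) (hr : r < j) :
    ((r:ℝ)/k) * ((Nat.choose j r : ℝ)/(Nat.choose k r : ℝ))
      + (1 - (r:ℝ)/k) * ((Nat.choose j (r+1) : ℝ)/(Nat.choose k (r+1) : ℝ))
    = ((j:ℝ)/k) * ((Nat.choose j r : ℝ)/(Nat.choose k r : ℝ)) := by
  have hrk : r < k := lt_of_lt_of_le hr hj
  have h1 : (Nat.choose j (r+1) : ℝ) * (r+1) = (Nat.choose j r : ℝ) * ((j:ℝ) - r) := by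
    have := congrArg (Nat.cast : ℕ → ℝ) (Nat.choose_succ_right_eq j r)
    push_cast [Nat.cast_sub hr.le] at this
    linarith [this]
  have h2 : (Nat.choose k (r+1) : ℝ) * (r+1) = (Nat.choose k r : ℝ) * ((k:ℝ) - r) := by
    have := congrArg (Nat.cast : ℕ → ℝ) (Nat.choose_succ_right_eq k r)
    push_cast [Nat.cast_sub hrk.le] at this
    linarith [this]
  have hb : (Nat.choose k r : ℝ) ≠ 0 := Nat.cast_ne_zero.mpr (Nat.choose_pos hrk.le).ne'
  have hd : (Nat.choose k (r+1) : ℝ) ≠ 0 := Nat.cast_ne_zero.mpr (Nat.choose_pos hrk).ne'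
  have hk0 : (k:ℝ) ≠ 0 := by positivity
  field_simp
  linear_combination
    ((Nat.choose k (r+1):ℝ) * h1 - (Nat.choose j (r+1):ℝ) * h2)

/-- The vector `u^{(j)}` with `u^{(j)}(r) = C(j,r)/C(k,r)` for `r ≤ j` and `0` for `r > j`
is a right eigenvector of `T⁰` with eigenvalue `j/k`. -/
theorem T0_right_eigenvector (k j : ℕ) (hk : 1 ≤ k) (hj : j ≤ k) :
    (T0 k).mulVec
        (fun r : Fin (k + 1) =>
          if (r : ℕ) ≤ j then (Nat.choose j r : ℝ) / (Nat.choose k r : ℝ) else 0) =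
      ((j : ℝ) / k) •
        (fun r : Fin (k + 1) =>
          if (r : ℕ) ≤ j then (Nat.choose j r : ℝ) / (Nat.choose k r : ℝ) else 0) := by
  set u : Fin (k + 1) → ℝ := fun r =>
    if (r : ℕ) ≤ j then (Nat.choose j r : ℝ) / (Nat.choose k r : ℝ) else 0 with hu
  funext r
  simp only [Matrix.mulVec, dotProduct, Pi.smul_apply, smul_eq_mul]
  by_cases hrk : (r : ℕ) < k
  · set r' : Fin (k + 1) := ⟨(r : ℕ) + 1, by omega⟩ with hr'
    have hne : r ≠ r' := by
      intro h
      have : (r : ℕ) = (r : ℕ) + 1 := congrArg Fin.val h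
      omega
    have hzero : ∀ l ∈ Finset.univ, l ∉ ({r, r'} : Finset (Fin (k+1))) →
        T0 k r l * u l = 0 := by
      intro l _ hl
      simp only [Finset.mem_insert, Finset.mem_singleton, not_or] at hl
      have h1 : r ≠ l := fun h => hl.1 h.symm
      have h2 : (l : ℕ) ≠ (r : ℕ) + 1 := by
        intro h
        exact hl.2 (Fin.ext h)
      simp [T0, h1, h2]
    have hsum : ∑ l, T0 k r l * u l = T0 k r r * u r + T0 k r r' * u r' := by
      rw [← Finset.sum_subset (Finset.subset_univ ({r, r'} : Finset (Fin (k+1)))) hzero]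
      exact Finset.sum_pair hne
    rw [hsum]
    have hTrr : T0 k r r = (r : ℝ) / k := by simp [T0]
    have hTrr' : T0 k r r' = 1 - (r : ℝ) / k := by
      simp [T0, hne, hr']
      intro h
      have := congrArg Fin.val h
      simp at this
    rw [hTrr, hTrr']
    rcases lt_trichotomy (r : ℕ) j with hlt | heq | hgt
    · have h1 : u r = (Nat.choose j r : ℝ) / (Nat.choose k r : ℝ) := by
        simp [hu, hlt.le]
      have h2 : u r' = (Nat.choose j ((r:ℕ)+1) : ℝ) / (Nat.choose k ((r:ℕ)+1) : ℝ) := by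
        simp [hu, hr', Nat.succ_le_of_lt hlt]
      rw [h1, h2]
      exact key_arith k j r hk hj hlt
    · have h1 : u r = (Nat.choose j r : ℝ) / (Nat.choose k r : ℝ) := by
        simp [hu, heq.le]
      have h2 : u r' = 0 := by
        simp only [hu, hr']
        simp [heq]
      rw [h1, h2, heq]
      ring
    · have h1 : u r = 0 := by simp [hu, not_le.mpr hgt]
      have h2 : u r' = 0 := by
        simp only [hu, hr']
        have : ¬ ((r:ℕ) + 1 ≤ j) := by omega
        simp [this]
      rw [h1, h2]
      ring
  · have hreq : (r : ℕ) = k := by omega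
    have hzero : ∀ l ∈ Finset.univ, l ∉ ({r} : Finset (Fin (k+1))) →
        T0 k r l * u l = 0 := by
      intro l _ hl
      simp only [Finset.mem_singleton] at hl
      have h1 : r ≠ l := fun h => hl h.symm
      have h2 : (l : ℕ) ≠ (r : ℕ) + 1 := by
        have := l.isLt
        omega
      simp [T0, h1, h2]
    have hsum : ∑ l, T0 k r l * u l = T0 k r r * u r := by
      rw [← Finset.sum_subset (Finset.subset_univ ({r} : Finset (Fin (k+1)))) hzero]
      exact Finset.sum_singleton _ _
    rw [hsum]
    have hTrr : T0 k r r = (r : ℝ) / k := by simp [T0]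
    rw [hTrr]
    rcases eq_or_lt_of_le hj with hjk | hjk
    · have : (r : ℕ) = j := by omega
      rw [this]
    · have h1 : u r = 0 := by
        have : ¬ ((r:ℕ) ≤ j) := by omega
        simp [hu, this]
      rw [h1]
      ring
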